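/- Let n ≥ 3 and let G be the generalized quaternion group of order 2^n (with presentation ⟨a, b : a^{2^{n-1}} = e, b² = a^{2^{n-2}}, b^{-1}ab = a^{-1}⟩). Then Γ*(G) has a universal vertex; that is, there exists a non-isolated vertex H of Γ(G) that is adjacent in Γ(G) to every other non-isolated vertex. -/

import Mathlib

open scoped Pointwise

namespace QGaux

open QuaternionGroup

variable {m : ℕ}

def f1 : QuaternionGroup m → ZMod 2
  | .a i => ZMod.castHom (dvd_mul_right 2 m) (ZMod 2) i
  | .xa i => ZMod.castHom (dvd_mul_right 2 m) (ZMod 2) i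

def f2 : QuaternionGroup m → ZMod 2
  | .a _ => 0
  | .xa _ => 1

lemma f2_mul (x y : QuaternionGroup m) : f2 (x * y) = f2 x + f2 y := by
  rcases x with i | i <;> rcases y with j | j <;> simp [f2] <;> decide

lemma f1_mul (hm : Even m) (x y : QuaternionGroup m) : f1 (x * y) = f1 x + f1 y := by
  have hm2 : (ZMod.castHom (dvd_mul_right 2 m) (ZMod 2)) ((m : ℕ) : ZMod (2 * m)) = 0 := by
    rw [map_natCast]
    exact (ZMod.natCast_eq_zero_iff m 2).mpr hm.two_dvd
  have hneg : ∀ z : ZMod 2, -z = z := by decide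
  rcases x with i | i <;> rcases y with j | j <;>
    simp only [f1, a_mul_a, a_mul_xa, xa_mul_a, xa_mul_xa, map_add, map_sub, map_neg,
      sub_eq_add_neg, hneg, hm2] <;> ring

/-- The cyclic subgroup `⟨a⟩` of index 2. -/
def Hgrp (m : ℕ) : Subgroup (QuaternionGroup m) where
  carrier := {x | f2 x = 0}
  one_mem' := by simp [one_def, f2, -a_zero]
  mul_mem' := by
    intro x y hx hy
    simp only [Set.mem_setOf_eq, f2_mul] at *
    rw [hx, hy, add_zero]
  inv_mem' := by
    rintro (i | i) h
    · rfl
    · exact h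
/-- The subgroup of elements with even exponent. -/
def Lgrp (m : ℕ) (hm : Even m) : Subgroup (QuaternionGroup m) where
  carrier := {x | f1 x = 0}
  one_mem' := by simp [one_def, f1, -a_zero]
  mul_mem' := by
    intro x y hx hy
    simp only [Set.mem_setOf_eq, f1_mul hm] at *
    rw [hx, hy, add_zero]
  inv_mem' := by
    intro x h
    have h2 := f1_mul hm x x⁻¹
    rw [mul_inv_cancel] at h2
    have h0 : f1 (1 : QuaternionGroup m) = 0 := by simp [one_def, f1, -a_zero]
    have : ∀ z w : ZMod 2, z + w = 0 → z = 0 → w = 0 := by decide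
    exact this _ _ (h0 ▸ h2.symm) h

lemma mem_Hgrp_iff (x : QuaternionGroup m) : x ∈ Hgrp m ↔ f2 x = 0 := Iff.rfl

lemma a_mem_Hgrp (i : ZMod (2 * m)) : a i ∈ Hgrp m := rfl

lemma xa_not_mem_Hgrp (i : ZMod (2 * m)) : xa i ∉ Hgrp m := by
  intro h
  have : (1 : ZMod 2) = 0 := h
  simp at this

lemma a_pow (j : ZMod (2 * m)) (s : ℕ) : (a j : QuaternionGroup m) ^ s = a ((s : ZMod (2 * m)) * j) := by
  induction s with
  | zero => simp [one_def, -a_zero]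
  | succ k ih => rw [pow_succ, ih, a_mul_a]; congr 1; push_cast; ring

lemma gen_lemma [NeZero m] (K : Subgroup (QuaternionGroup m)) {j : ZMod (2 * m)}
    (hj : (a j : QuaternionGroup m) ∈ K) (hu : IsUnit j) (i : ZMod (2 * m)) :
    (a i : QuaternionGroup m) ∈ K := by
  obtain ⟨u, rfl⟩ := hu
  have : (a (u : ZMod (2 * m)) : QuaternionGroup m) ^ ((i * ((u⁻¹ : (ZMod (2*m))ˣ) : ZMod (2*m))).val) = a i := by
    rw [a_pow]
    congr 1
    rw [ZMod.natCast_val, ZMod.cast_id, mul_assoc]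
    simp
  exact this ▸ pow_mem hj _

lemma top_lemma [NeZero m] (K : Subgroup (QuaternionGroup m)) {t j : ZMod (2 * m)}
    (ht : (xa t : QuaternionGroup m) ∈ K) (hj : (a j : QuaternionGroup m) ∈ K)
    (hu : IsUnit j) : K = ⊤ := by
  rw [eq_top_iff]
  rintro (i | i) -
  · exact gen_lemma K hj hu i
  · have : (a (t - i) : QuaternionGroup m) * xa t = xa i := by
      rw [a_mul_xa]; congr 1; ring
    exact this ▸ mul_mem (gen_lemma K hj hu _) ht

/-- odd elements of `ZMod (2^k)` are units -/
lemma unit_of_odd {k : ℕ} (hpow : 2 * m = 2 ^ k) (j : ZMod (2 * m))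
    (hodd : ZMod.castHom (dvd_mul_right 2 m) (ZMod 2) j = 1) : IsUnit j := by
  have hm : NeZero (2 * m) := ⟨by rw [hpow]; positivity⟩
  have hval : (j.val : ZMod 2) = 1 := by
    rw [← hodd, ZMod.castHom_apply, ZMod.natCast_val]
  have hodd' : j.val % 2 = 1 := by
    have := congrArg ZMod.val hval
    rwa [ZMod.val_natCast, ZMod.val_one] at this
  have hcop : Nat.Coprime j.val (2 * m) := by
    obtain ⟨v, hv⟩ : ∃ v, j.val = v := ⟨_, rfl⟩
    rw [hv] at hodd' ⊢
    rw [hpow]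
    exact Nat.Coprime.pow_right _ (Nat.coprime_two_right.mpr (Nat.odd_iff.mpr hodd'))
  have := (ZMod.isUnit_iff_coprime j.val (2 * m)).mpr hcop
  rwa [ZMod.natCast_val, ZMod.cast_id] at this

lemma prodH (K : Subgroup (QuaternionGroup m)) {t : ZMod (2 * m)}
    (ht : (xa t : QuaternionGroup m) ∈ K) :
    (Hgrp m : Set (QuaternionGroup m)) * (K : Set (QuaternionGroup m)) = Set.univ := by
  ext g
  simp only [Set.mem_univ, iff_true]
  rcases g with j | j
  · exact Set.mem_mul.mpr ⟨a j, a_mem_Hgrp j, 1, K.one_mem, mul_one _⟩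
  · refine Set.mem_mul.mpr ⟨a (t - j), a_mem_Hgrp _, xa t, ht, ?_⟩
    rw [a_mul_xa]; congr 1; ring

end QGaux

open scoped Pointwise

/-- Adjacency in the co-maximal subgroup graph `Γ(G)`: `H` and `K` are distinct
non-trivial proper subgroups of `G` with `HK = G` as a setwise product. -/
def comaxAdj {G : Type*} [Group G] (H K : Subgroup G) : Prop :=
  H ≠ ⊥ ∧ H ≠ ⊤ ∧ K ≠ ⊥ ∧ K ≠ ⊤ ∧ H ≠ K ∧ (H : Set G) * (K : Set G) = Set.univ

/-- For `n ≥ 3`, the deleted co-maximal subgroup graph of the generalized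
quaternion group of order `2^n` has a universal vertex. -/
theorem quaternion_deleted_comaximal_universal (n : ℕ) (hn : 3 ≤ n) :
    ∃ H : Subgroup (QuaternionGroup (2 ^ (n - 2))),
      (∃ L, comaxAdj H L) ∧
      ∀ K : Subgroup (QuaternionGroup (2 ^ (n - 2))),
        (∃ L, comaxAdj K L) → K ≠ H → comaxAdj H K := by
  open QuaternionGroup QGaux in
  set m : ℕ := 2 ^ (n - 2) with hm_def
  haveI : NeZero m := ⟨pow_ne_zero _ two_ne_zero⟩
  have hm2 : 2 ≤ m := by
    have : 2 ^ 1 ≤ 2 ^ (n - 2) := Nat.pow_le_pow_right (by norm_num) (by omega)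
    simpa using this
  have hm_even : Even m := by
    rw [hm_def, Nat.even_pow]
    exact ⟨even_two, by omega⟩
  have hpow : 2 * m = 2 ^ (n - 1) := by
    rw [hm_def, ← pow_succ']
    congr 1
    omega
  haveI : Fact (1 < 2 * m) := ⟨by omega⟩
  -- basic facts
  have ha1ne : (a 1 : QuaternionGroup m) ≠ 1 := by
    rw [one_def]
    intro h
    exact one_ne_zero (a.inj h)
  have hxa0ne : (xa 0 : QuaternionGroup m) ≠ 1 := by
    rw [one_def]; intro h; cases h
  have hHbot : Hgrp m ≠ ⊥ := by
    intro h
    exact ha1ne ((Subgroup.mem_bot).mp (h ▸ a_mem_Hgrp 1))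
  have hHtop : Hgrp m ≠ ⊤ := by
    intro h
    exact xa_not_mem_Hgrp 0 (h ▸ Subgroup.mem_top _)
  have hf1a1 : f1 (a 1 : QuaternionGroup m) = 1 := by
    show ZMod.castHom (dvd_mul_right 2 m) (ZMod 2) 1 = 1
    rw [map_one]
  have hxa0L : (xa 0 : QuaternionGroup m) ∈ Lgrp m hm_even := by
    show ZMod.castHom (dvd_mul_right 2 m) (ZMod 2) 0 = 0
    rw [map_zero]
  have hone : ∀ z : ZMod 2, z ≠ 0 → z = 1 := by decide
  refine ⟨Hgrp m, ⟨Lgrp m hm_even, hHbot, hHtop, ?_, ?_, ?_, prodH _ hxa0L⟩, ?_⟩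
  · -- L ≠ ⊥
    intro h
    exact hxa0ne ((Subgroup.mem_bot).mp (h ▸ hxa0L))
  · -- L ≠ ⊤
    intro h
    have : (a 1 : QuaternionGroup m) ∈ Lgrp m hm_even := h ▸ Subgroup.mem_top _
    have : f1 (a 1 : QuaternionGroup m) = 0 := this
    rw [hf1a1] at this
    exact one_ne_zero this
  · -- H ≠ L
    intro h
    exact xa_not_mem_Hgrp 0 (h ▸ hxa0L)
  · -- universality
    rintro K ⟨L', hKb, hKt, hLb', hLt', hKL', hprodKL⟩ hKH
    refine ⟨hHbot, hHtop, hKb, hKt, Ne.symm hKH, ?_⟩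
    by_cases hex : ∃ t, (xa t : QuaternionGroup m) ∈ K
    · obtain ⟨t, ht⟩ := hex
      exact prodH K ht
    · exfalso
      push_neg at hex
      -- every element of K is of the form a j with even j
      have hKeven : ∀ j : ZMod (2 * m), (a j : QuaternionGroup m) ∈ K → f1 (a j) = 0 := by
        intro j hj
        by_contra h
        have hu : IsUnit j := unit_of_odd hpow j (hone _ h)
        apply hKH
        apply le_antisymm
        · rintro (i | i) hx
          · exact a_mem_Hgrp i
          · exact absurd hx (hex i)
        · rintro (i | i) hx
          · exact gen_lemma K hj hu i
          · exact absurd hx (xa_not_mem_Hgrp i)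
      by_cases hLx : ∃ t, (xa t : QuaternionGroup m) ∈ L'
      · obtain ⟨t, ht⟩ := hLx
        -- every element of L' satisfies f1 x = f2 x * f1 (xa t)
        have hLf : ∀ x ∈ L', f1 x = f2 x * f1 (xa t : QuaternionGroup m) := by
          rintro (j | s) hx
          · -- a j ∈ L' must be even
            show f1 (a j : QuaternionGroup m) = 0 * _
            rw [zero_mul]
            by_contra h
            have hu : IsUnit j := unit_of_odd hpow j (hone _ h)
            exact hLt' (top_lemma L' ht hx hu)
          · -- xa s ∈ L' must have same parity as xa t
            show f1 (xa s : QuaternionGroup m) = 1 * _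
            rw [one_mul]
            by_contra h
            have hmem : (xa t * xa s : QuaternionGroup m) ∈ L' := mul_mem ht hx
            have hval : f1 ((xa t : QuaternionGroup m) * xa s) = 1 := by
              rw [f1_mul hm_even]
              have : ∀ z w : ZMod 2, z ≠ w → w + z = 1 := by decide
              exact this _ _ h
            rw [xa_mul_xa] at hmem hval
            have hu : IsUnit ((m : ZMod (2 * m)) + s - t) := unit_of_odd hpow _ hval
            exact hLt' (top_lemma L' ht hmem hu)
        -- now derive the contradiction using a 1
        have : (a 1 : QuaternionGroup m) ∈ (K : Set (QuaternionGroup m)) * (L' : Set _) := by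
          rw [hprodKL]; trivial
        obtain ⟨x, hx, y, hy, hxy⟩ := Set.mem_mul.mp this
        have hf2x : f2 x = 0 := by
          rcases x with i | i
          · rfl
          · exact absurd hx (hex i)
        have hf2y : f2 y = 0 := by
          have h2 := f2_mul x y
          rw [hxy] at h2
          have : f2 (a 1 : QuaternionGroup m) = 0 := rfl
          rw [this, hf2x, zero_add] at h2
          exact h2.symm
        have hf1y : f1 y = 0 := by rw [hLf y hy, hf2y, zero_mul]
        have hf1x : f1 x = 0 := by
          rcases x with i | i
          · exact hKeven i hx
          · exact absurd hx (hex i)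
        have h1 := f1_mul hm_even x y
        rw [hxy, hf1a1, hf1x, hf1y, add_zero] at h1
        exact one_ne_zero h1
      · -- every element of L' is an a; then xa 0 can't be in the product
        push_neg at hLx
        have : (xa 0 : QuaternionGroup m) ∈ (K : Set (QuaternionGroup m)) * (L' : Set _) := by
          rw [hprodKL]; trivial
        obtain ⟨x, hx, y, hy, hxy⟩ := Set.mem_mul.mp this
        rcases x with i | i
        · rcases y with j | j
          · rw [a_mul_a] at hxy
            cases hxy
          · exact absurd hy (hLx j)
        · exact absurd hx (hex i)
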